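/- Let d ≥ 1 be an integer, C ≥ 0, and let s, t : ℤ → ℝ satisfy |s(j)| ≤ C and |t(j)| ≤ C for all j ∈ ℤ, and assume both s and t satisfy the zero d-window condition. Set δ = sup_{j∈ℤ} |s(j) − t(j)|. Then for every k ∈ ℤ and all natural numbers q, r with r < d, |∑_{l=0}^{qd+r} (e^{S_s(k,l)} − e^{S_t(k,l)})| ≤ (q+1) · d · 2^d · e^{dC} · (e^{δ} − 1); in particular the left-hand side is at most (q+1)·K·δ·e^{δ} for a constant K depending only on d and C. -/

import Mathlib

/-- `s : ℤ → ℝ` satisfies the zero `d`-window condition if every `d` consecutive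
values sum to zero: `∑_{j=m}^{m+d-1} s j = 0` for all `m : ℤ`. -/
def ZeroWindow (d : ℕ) (s : ℤ → ℝ) : Prop :=
  ∀ m : ℤ, ∑ j ∈ Finset.range d, s (m + j) = 0

/-- Forward partial sum `S_s(k,l) = ∑_{i=1}^{l} s (k+i)`, with `S_s(k,0) = 0`. -/
def Sfwd (s : ℤ → ℝ) (k : ℤ) (l : ℕ) : ℝ :=
  ∑ i ∈ Finset.range l, s (k + (i + 1))

lemma my_exp_sub_one_le (x : ℝ) : Real.exp x - 1 ≤ x * Real.exp x := by
  have h := Real.add_one_le_exp (-x)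
  rw [Real.exp_neg] at h
  have hp := Real.exp_pos x
  have h2 := mul_le_mul_of_nonneg_right h hp.le
  rw [inv_mul_cancel₀ hp.ne'] at h2
  nlinarith

lemma my_exp_sub_exp_le {a b M : ℝ} (ha : a ≤ M) :
    Real.exp a - Real.exp b ≤ Real.exp M * |a - b| := by
  rcases le_total a b with h | h
  · have h1 : Real.exp a - Real.exp b ≤ 0 :=
      sub_nonpos.2 (Real.exp_le_exp.2 h)
    exact h1.trans (by positivity)
  · have h1 : Real.exp a - Real.exp b = Real.exp b * (Real.exp (a - b) - 1) := by
      rw [mul_sub, ← Real.exp_add, mul_one]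
      ring_nf
    rw [h1]
    calc Real.exp b * (Real.exp (a - b) - 1)
        ≤ Real.exp b * ((a - b) * Real.exp (a - b)) := by
          have := my_exp_sub_one_le (a - b)
          exact mul_le_mul_of_nonneg_left this (Real.exp_pos b).le
      _ = (a - b) * (Real.exp b * Real.exp (a - b)) := by ring
      _ = (a - b) * Real.exp a := by rw [← Real.exp_add]; ring_nf
      _ ≤ |a - b| * Real.exp M := by
          apply mul_le_mul (le_abs_self _) (Real.exp_le_exp.2 ha)
            (Real.exp_pos a).le (abs_nonneg _)
      _ = Real.exp M * |a - b| := mul_comm _ _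

lemma my_abs_exp_sub_exp_le {a b M : ℝ} (ha : a ≤ M) (hb : b ≤ M) :
    |Real.exp a - Real.exp b| ≤ Real.exp M * |a - b| := by
  rw [abs_le]
  constructor
  · have := my_exp_sub_exp_le (a := b) (b := a) hb
    rw [abs_sub_comm] at this
    linarith
  · exact my_exp_sub_exp_le ha

lemma my_sfwd_bound {s : ℤ → ℝ} {C : ℝ} (hs : ∀ j : ℤ, |s j| ≤ C) (k : ℤ) (l : ℕ) :
    |Sfwd s k l| ≤ l * C := by
  unfold Sfwd
  calc |∑ i ∈ Finset.range l, s (k + (i + 1))|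
      ≤ ∑ i ∈ Finset.range l, |s (k + (i + 1))| := Finset.abs_sum_le_sum_abs _ _
    _ ≤ ∑ _i ∈ Finset.range l, C := Finset.sum_le_sum fun i _ => hs _
    _ = l * C := by rw [Finset.sum_const, Finset.card_range, nsmul_eq_mul]

lemma my_sfwd_add_d {d : ℕ} {s : ℤ → ℝ} (hws : ZeroWindow d s) (k : ℤ) (m : ℕ) :
    Sfwd s k (m + d) = Sfwd s k m := by
  unfold Sfwd
  rw [Finset.sum_range_add]
  have h : ∑ i ∈ Finset.range d, s (k + (↑(m + i) + 1))
      = ∑ i ∈ Finset.range d, s ((k + m + 1) + i) := by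
    apply Finset.sum_congr rfl
    intro i _
    congr 1
    push_cast
    ring
  rw [h, hws (k + m + 1), add_zero]

lemma my_sfwd_mod {d : ℕ} (hd : 1 ≤ d) {s : ℤ → ℝ} (hws : ZeroWindow d s) (k : ℤ) (l : ℕ) :
    Sfwd s k l = Sfwd s k (l % d) := by
  induction l using Nat.strong_induction_on with
  | _ l ih =>
    rcases lt_or_ge l d with h | h
    · rw [Nat.mod_eq_of_lt h]
    · obtain ⟨m, rfl⟩ : ∃ m, l = m + d := ⟨l - d, (Nat.sub_add_cancel h).symm⟩
      rw [my_sfwd_add_d hws, ih m (by omega), Nat.add_mod_right]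

theorem exp_sum_diff_numerator_bound (d : ℕ) (hd : 1 ≤ d) (C : ℝ) (hC : 0 ≤ C)
    (s t : ℤ → ℝ) (hs : ∀ j : ℤ, |s j| ≤ C) (ht : ∀ j : ℤ, |t j| ≤ C)
    (hws : ZeroWindow d s) (hwt : ZeroWindow d t) :
    (∀ (k : ℤ) (q r : ℕ), r < d →
      |∑ l ∈ Finset.range (q * d + r + 1),
          (Real.exp (Sfwd s k l) - Real.exp (Sfwd t k l))| ≤
        ((q : ℝ) + 1) * d * 2 ^ d * Real.exp ((d : ℝ) * C) *
          (Real.exp (⨆ j : ℤ, |s j - t j|) - 1)) ∧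
    ∃ K : ℝ, K = (d : ℝ) * 2 ^ d * Real.exp ((d : ℝ) * C) ∧ 0 < K ∧
      ∀ (k : ℤ) (q r : ℕ), r < d →
        |∑ l ∈ Finset.range (q * d + r + 1),
            (Real.exp (Sfwd s k l) - Real.exp (Sfwd t k l))| ≤
          ((q : ℝ) + 1) * K * (⨆ j : ℤ, |s j - t j|) *
            Real.exp (⨆ j : ℤ, |s j - t j|) := by
  set δ : ℝ := ⨆ j : ℤ, |s j - t j| with hδdef
  -- basic facts about δ
  have hbdd : BddAbove (Set.range fun j : ℤ => |s j - t j|) := by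
    refine ⟨C + C, ?_⟩
    rintro x ⟨j, rfl⟩
    calc |s j - t j| ≤ |s j| + |t j| := abs_sub _ _
      _ ≤ C + C := add_le_add (hs j) (ht j)
  have hδj : ∀ j : ℤ, |s j - t j| ≤ δ := fun j => le_ciSup hbdd j
  have hδ0 : 0 ≤ δ := (abs_nonneg _).trans (hδj 0)
  -- the difference function
  set u : ℤ → ℝ := fun j => s j - t j with hu
  have hwu : ZeroWindow d u := by
    intro m
    have := hws m
    have := hwt m
    simp only [hu, Finset.sum_sub_distrib]
    linarith
  have hsub : ∀ (k : ℤ) (l : ℕ), Sfwd s k l - Sfwd t k l = Sfwd u k l := by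
    intro k l
    simp [Sfwd, Finset.sum_sub_distrib, hu]
  -- per-term bound
  have hterm : ∀ (k : ℤ) (l : ℕ),
      |Real.exp (Sfwd s k l) - Real.exp (Sfwd t k l)| ≤
        Real.exp ((d : ℝ) * C) * ((d : ℝ) * δ) := by
    intro k l
    have hmd : ((l % d : ℕ) : ℝ) ≤ (d : ℝ) := by
      exact_mod_cast (Nat.mod_lt l hd).le
    have hSa : |Sfwd s k l| ≤ (d : ℝ) * C := by
      rw [my_sfwd_mod hd hws]
      exact (my_sfwd_bound hs k _).trans (mul_le_mul_of_nonneg_right hmd hC)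
    have hSb : |Sfwd t k l| ≤ (d : ℝ) * C := by
      rw [my_sfwd_mod hd hwt]
      exact (my_sfwd_bound ht k _).trans (mul_le_mul_of_nonneg_right hmd hC)
    have hSd : |Sfwd s k l - Sfwd t k l| ≤ (d : ℝ) * δ := by
      rw [hsub, my_sfwd_mod hd hwu]
      refine (my_sfwd_bound (fun j => hδj j) k _).trans ?_
      exact mul_le_mul_of_nonneg_right hmd hδ0
    calc |Real.exp (Sfwd s k l) - Real.exp (Sfwd t k l)|
        ≤ Real.exp ((d : ℝ) * C) * |Sfwd s k l - Sfwd t k l| :=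
          my_abs_exp_sub_exp_le ((le_abs_self _).trans hSa) ((le_abs_self _).trans hSb)
      _ ≤ Real.exp ((d : ℝ) * C) * ((d : ℝ) * δ) :=
          mul_le_mul_of_nonneg_left hSd (Real.exp_pos _).le
  -- main bound (first part)
  have hmain : ∀ (k : ℤ) (q r : ℕ), r < d →
      |∑ l ∈ Finset.range (q * d + r + 1),
          (Real.exp (Sfwd s k l) - Real.exp (Sfwd t k l))| ≤
        ((q : ℝ) + 1) * d * 2 ^ d * Real.exp ((d : ℝ) * C) * (Real.exp δ - 1) := by
    intro k q r hr
    have hcard : ((q * d + r + 1 : ℕ) : ℝ) ≤ ((q : ℝ) + 1) * d := by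
      have : (r : ℝ) + 1 ≤ (d : ℝ) := by exact_mod_cast hr
      push_cast
      nlinarith [Nat.cast_nonneg (α := ℝ) q, Nat.cast_nonneg (α := ℝ) d]
    have hd2 : (d : ℝ) ≤ 2 ^ d := by
      exact_mod_cast (Nat.lt_two_pow_self (n := d)).le
    have hδe : δ ≤ Real.exp δ - 1 := by
      have := Real.add_one_le_exp δ
      linarith
    have hb2 : (d : ℝ) * δ ≤ 2 ^ d * (Real.exp δ - 1) :=
      mul_le_mul hd2 hδe hδ0 (by positivity)
    calc |∑ l ∈ Finset.range (q * d + r + 1),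
            (Real.exp (Sfwd s k l) - Real.exp (Sfwd t k l))|
        ≤ ∑ l ∈ Finset.range (q * d + r + 1),
            |Real.exp (Sfwd s k l) - Real.exp (Sfwd t k l)| :=
          Finset.abs_sum_le_sum_abs _ _
      _ ≤ ∑ _l ∈ Finset.range (q * d + r + 1),
            Real.exp ((d : ℝ) * C) * ((d : ℝ) * δ) :=
          Finset.sum_le_sum fun l _ => hterm k l
      _ = ((q * d + r + 1 : ℕ) : ℝ) * (Real.exp ((d : ℝ) * C) * ((d : ℝ) * δ)) := by
          rw [Finset.sum_const, Finset.card_range, nsmul_eq_mul]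
      _ ≤ (((q : ℝ) + 1) * d) * (Real.exp ((d : ℝ) * C) * (2 ^ d * (Real.exp δ - 1))) := by
          apply mul_le_mul hcard
            (mul_le_mul_of_nonneg_left hb2 (Real.exp_pos _).le)
            (by positivity) (by positivity)
      _ = ((q : ℝ) + 1) * d * 2 ^ d * Real.exp ((d : ℝ) * C) * (Real.exp δ - 1) := by
          ring
  refine ⟨hmain, (d : ℝ) * 2 ^ d * Real.exp ((d : ℝ) * C), rfl, ?_, ?_⟩
  · have hd0 : (0 : ℝ) < d := by exact_mod_cast hd
    positivity
  · intro k q r hr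
    refine (hmain k q r hr).trans ?_
    have h1 : Real.exp δ - 1 ≤ δ * Real.exp δ := my_exp_sub_one_le δ
    have hpre : (0 : ℝ) ≤ ((q : ℝ) + 1) * d * 2 ^ d * Real.exp ((d : ℝ) * C) := by
      positivity
    calc ((q : ℝ) + 1) * d * 2 ^ d * Real.exp ((d : ℝ) * C) * (Real.exp δ - 1)
        ≤ ((q : ℝ) + 1) * d * 2 ^ d * Real.exp ((d : ℝ) * C) * (δ * Real.exp δ) :=
          mul_le_mul_of_nonneg_left h1 hpre
      _ = ((q : ℝ) + 1) * ((d : ℝ) * 2 ^ d * Real.exp ((d : ℝ) * C)) * δ * Real.exp δ := by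
          ring
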